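/- Let K, L be star bodies in ℝⁿ and φ, ψ : (0,∞) → (0,∞) continuous, with ψ invertible and H = φ ∘ ψ⁻¹ convex. Then Ṽ_φ(K,L)/|K| ≥ H( Ṽ_ψ(K,L)/|K| ). If H is strictly convex, equality holds if and only if K and L are dilates of each other. -/

import Mathlib

noncomputable section

open Metric Set MeasureTheory Filter
open scoped Pointwise NNReal ENNReal

/-- A star body about the origin in `ℝⁿ`, represented by its radial function,
which is continuous and positive on the unit sphere. -/
structure StarBody (n : ℕ) where
  ρ : EuclideanSpace ℝ (Fin n) → ℝ
  pos : ∀ u : EuclideanSpace ℝ (Fin n), ‖u‖ = 1 → 0 < ρ u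
  cont : ContinuousOn ρ (sphere (0 : EuclideanSpace ℝ (Fin n)) 1)

/-- `M` is the Orlicz `φ`-radial addition `K +̃_φ L`, i.e.
`φ(ρ_M(u)/ρ_K(u), ρ_M(u)/ρ_L(u)) = 1` for all `u` on the unit sphere. -/
def IsOrliczSum {n : ℕ} (φ : ℝ → ℝ → ℝ) (K L M : StarBody n) : Prop :=
  ∀ u : EuclideanSpace ℝ (Fin n), ‖u‖ = 1 →
    φ (M.ρ u / K.ρ u) (M.ρ u / L.ρ u) = 1

/-- The spherical Lebesgue measure on the unit sphere `S^{n-1}`. -/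
def sphereMeasure (n : ℕ) : Measure (sphere (0 : EuclideanSpace ℝ (Fin n)) 1) :=
  (volume : Measure (EuclideanSpace ℝ (Fin n))).toSphere

/-- The volume of a star body via the polar coordinate formula
`|K| = (1/n) ∫_{S^{n-1}} ρ_K(u)ⁿ dσ(u)`. -/
def StarBody.vol {n : ℕ} (K : StarBody n) : ℝ :=
  (1 / (n : ℝ)) * ∫ u : sphere (0 : EuclideanSpace ℝ (Fin n)) 1,
    (K.ρ u) ^ n ∂(sphereMeasure n)

/-- The Orlicz `L_φ`-dual mixed volume
`Ṽ_φ(K,L) = (1/n) ∫_{S^{n-1}} φ(ρ_K(u)/ρ_L(u)) ρ_K(u)ⁿ dσ(u)`. -/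
def dualMixedVolume {n : ℕ} (φ : ℝ → ℝ) (K L : StarBody n) : ℝ :=
  (1 / (n : ℝ)) * ∫ u : sphere (0 : EuclideanSpace ℝ (Fin n)) 1,
    φ (K.ρ u / L.ρ u) * (K.ρ u) ^ n ∂(sphereMeasure n)

instance (n : ℕ) : IsFiniteMeasure (sphereMeasure n) := by
  unfold sphereMeasure; infer_instance


lemma sphereMeasure_isOpenPosMeasure {n : ℕ} (hn : 0 < n) :
    (sphereMeasure n).IsOpenPosMeasure := by
  constructor
  intro U hU hne
  have hUm : MeasurableSet U := hU.measurableSet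
  rw [sphereMeasure, Measure.toSphere_apply' _ hUm]
  obtain ⟨V, hV, hUV⟩ := isOpen_induced_iff.mp hU
  have himg : (Subtype.val '' U : Set (EuclideanSpace ℝ (Fin n)))
      = V ∩ sphere (0 : EuclideanSpace ℝ (Fin n)) 1 := by
    rw [← hUV, Subtype.image_preimage_coe, Set.inter_comm]
  set g : EuclideanSpace ℝ (Fin n) → EuclideanSpace ℝ (Fin n) := fun x => ‖x‖⁻¹ • x with hg
  set W : Set (EuclideanSpace ℝ (Fin n)) :=
    ({(0 : EuclideanSpace ℝ (Fin n))}ᶜ ∩ ball 0 1) ∩ g ⁻¹' V with hW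
  have hgc : ContinuousOn g ({(0 : EuclideanSpace ℝ (Fin n))}ᶜ ∩ ball 0 1) := by
    apply ContinuousOn.fun_smul
    · exact ContinuousOn.inv₀ continuous_norm.continuousOn
        (fun x hx => norm_ne_zero_iff.mpr hx.1)
    · exact continuousOn_id
  have hWopen : IsOpen W :=
    hgc.isOpen_inter_preimage (isClosed_singleton.isOpen_compl.inter isOpen_ball) hV
  have hWsub : W ⊆ Ioo (0:ℝ) 1 • (Subtype.val '' U) := by
    rintro x ⟨⟨hx0, hxb⟩, hxV⟩
    have hx0' : x ≠ 0 := hx0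
    have hxn : ‖x‖ ≠ 0 := norm_ne_zero_iff.mpr hx0'
    have h1 : ‖x‖ ∈ Ioo (0:ℝ) 1 := ⟨norm_pos_iff.mpr hx0', mem_ball_zero_iff.mp hxb⟩
    have hgs : g x ∈ sphere (0 : EuclideanSpace ℝ (Fin n)) 1 := by
      rw [mem_sphere_zero_iff_norm, hg]
      simp [norm_smul, abs_of_nonneg (inv_nonneg.mpr (norm_nonneg x)), inv_mul_cancel₀ hxn]
    have hu : g x ∈ (Subtype.val '' U : Set (EuclideanSpace ℝ (Fin n))) := by
      rw [himg]; exact ⟨hxV, hgs⟩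
    have hx : x = ‖x‖ • g x := (smul_inv_smul₀ hxn x).symm
    rw [hx]
    exact Set.smul_mem_smul h1 hu
  have hWne : W.Nonempty := by
    obtain ⟨u, huU⟩ := hne
    have husph : (u : EuclideanSpace ℝ (Fin n)) ∈ sphere (0 : EuclideanSpace ℝ (Fin n)) 1 := u.2
    have hun : ‖(u : EuclideanSpace ℝ (Fin n))‖ = 1 := mem_sphere_zero_iff_norm.mp husph
    refine ⟨(2⁻¹ : ℝ) • (u : EuclideanSpace ℝ (Fin n)), ⟨⟨?_, ?_⟩, ?_⟩⟩
    · intro h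
      have : ‖(2⁻¹ : ℝ) • (u : EuclideanSpace ℝ (Fin n))‖ = 0 := by
        rw [show ((2⁻¹ : ℝ) • (u : EuclideanSpace ℝ (Fin n))) = 0 from h]; simp
      rw [norm_smul, hun] at this; norm_num at this
    · rw [mem_ball_zero_iff, norm_smul, hun]; norm_num
    · have : g ((2⁻¹ : ℝ) • (u : EuclideanSpace ℝ (Fin n))) = u := by
        rw [hg]; simp only [norm_smul, hun, mul_one]
        rw [smul_smul]
        norm_num
      rw [Set.mem_preimage, this]
      have : (u : EuclideanSpace ℝ (Fin n)) ∈ V ∩ sphere (0 : EuclideanSpace ℝ (Fin n)) 1 := by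
        rw [← himg]; exact mem_image_of_mem _ huU
      exact this.1
  have hvol : 0 < volume W := hWopen.measure_pos volume hWne
  have hle : volume W ≤ volume (Ioo (0:ℝ) 1 • (Subtype.val '' U)) := measure_mono hWsub
  refine mul_ne_zero ?_ ?_
  · simp only [ne_eq, Nat.cast_eq_zero]
    rw [finrank_euclideanSpace_fin]
    omega
  · exact (lt_of_lt_of_le hvol hle).ne'

lemma continuousOn_inv_image_compact {f finv : ℝ → ℝ} {s : Set ℝ} (hs : IsCompact s)
    (hfc : ContinuousOn f s) (hinv : ∀ t ∈ s, finv (f t) = t) :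
    ContinuousOn finv (f '' s) := by
  have hinj : Set.InjOn f s := fun a ha b hb hab => by
    rw [← hinv a ha, ← hinv b hb, hab]
  have hbij : Set.BijOn f s (f '' s) := hinj.bijOn_image
  haveI : CompactSpace s := isCompact_iff_compactSpace.mp hs
  set e : s ≃ (f '' s : Set ℝ) := Set.BijOn.equiv f hbij with he
  have hec : Continuous e := by
    apply Continuous.subtype_mk
    exact hfc.restrict
  set h : s ≃ₜ (f '' s : Set ℝ) := Continuous.homeoOfEquivCompactToT2 (f := e) hec with hh
  rw [continuousOn_iff_continuous_restrict]
  have hres : (f '' s).domRestrict finv = fun y => ((h.symm y : s) : ℝ) := by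
    funext y
    obtain ⟨t, hts, hty⟩ := y.2
    have hy : h ⟨t, hts⟩ = y := Subtype.ext hty
    have : h.symm y = ⟨t, hts⟩ := by rw [← hy]; exact h.symm_apply_apply _
    rw [this]
    simp only [Set.domRestrict_apply]
    rw [← hty, hinv t hts]
  rw [hres]
  exact continuous_subtype_val.comp h.symm.continuous


/-- Comparison of dual mixed volumes via Jensen's inequality: if `H = φ ∘ ψ⁻¹`
is convex then `Ṽ_φ(K,L)/|K| ≥ H(Ṽ_ψ(K,L)/|K|)`, with equality (for strictly
convex `H`) iff `K` and `L` are dilates. -/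
theorem dual_mixed_volume_compare {n : ℕ} (hn : 0 < n)
    (φ ψ ψinv H : ℝ → ℝ)
    (hφc : ContinuousOn φ (Set.Ioi 0)) (hφp : ∀ t : ℝ, 0 < t → 0 < φ t)
    (hψc : ContinuousOn ψ (Set.Ioi 0)) (hψp : ∀ t : ℝ, 0 < t → 0 < ψ t)
    (hinv : ∀ t : ℝ, 0 < t → ψinv (ψ t) = t)
    (hH : ∀ s : ℝ, s ∈ ψ '' Set.Ioi 0 → H s = φ (ψinv s))
    (hHconv : ConvexOn ℝ (ψ '' Set.Ioi 0) H)
    (K L : StarBody n) :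
    H (dualMixedVolume ψ K L / K.vol) ≤ dualMixedVolume φ K L / K.vol ∧
      (StrictConvexOn ℝ (ψ '' Set.Ioi 0) H →
        (H (dualMixedVolume ψ K L / K.vol) = dualMixedVolume φ K L / K.vol ↔
          ∃ lam : ℝ, 0 < lam ∧
            ∀ u : EuclideanSpace ℝ (Fin n), ‖u‖ = 1 → L.ρ u = lam * K.ρ u)) := by
  classical
  haveI hnt : Nontrivial (EuclideanSpace ℝ (Fin n)) := by
    apply Module.nontrivial_of_finrank_pos (R := ℝ)
      (by rw [finrank_euclideanSpace_fin]; exact hn)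
  haveI hop : (sphereMeasure n).IsOpenPosMeasure := sphereMeasure_isOpenPosMeasure hn
  haveI hSne : Nonempty (sphere (0 : EuclideanSpace ℝ (Fin n)) 1) :=
    ((NormedSpace.sphere_nonempty (x := (0 : EuclideanSpace ℝ (Fin n)))).mpr
      zero_le_one).to_subtype
  obtain ⟨u₀⟩ := id hSne
  set σ := sphereMeasure n with hσdef
  have hnorm : ∀ u : sphere (0 : EuclideanSpace ℝ (Fin n)) 1,
      ‖(u : EuclideanSpace ℝ (Fin n))‖ = 1 := fun u => mem_sphere_zero_iff_norm.mp u.2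
  have hKpos : ∀ u : sphere (0 : EuclideanSpace ℝ (Fin n)) 1, 0 < K.ρ u :=
    fun u => K.pos _ (hnorm u)
  have hLpos : ∀ u : sphere (0 : EuclideanSpace ℝ (Fin n)) 1, 0 < L.ρ u :=
    fun u => L.pos _ (hnorm u)
  have hKc : Continuous (fun u : sphere (0 : EuclideanSpace ℝ (Fin n)) 1 => K.ρ u) :=
    K.cont.restrict
  have hLc : Continuous (fun u : sphere (0 : EuclideanSpace ℝ (Fin n)) 1 => L.ρ u) :=
    L.cont.restrict
  set r : sphere (0 : EuclideanSpace ℝ (Fin n)) 1 → ℝ := fun u => K.ρ u / L.ρ u with hrdef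
  have hrpos : ∀ u, 0 < r u := fun u => div_pos (hKpos u) (hLpos u)
  have hrc : Continuous r := hKc.div hLc (fun u => (hLpos u).ne')
  set w : sphere (0 : EuclideanSpace ℝ (Fin n)) 1 → ℝ := fun u => (K.ρ u) ^ n with hwdef
  have hwpos : ∀ u, 0 < w u := fun u => pow_pos (hKpos u) n
  have hwc : Continuous w := hKc.pow n
  -- integrability of continuous functions
  have hint : ∀ (ν : Measure (sphere (0 : EuclideanSpace ℝ (Fin n)) 1)) [IsFiniteMeasure ν]
      (g : sphere (0 : EuclideanSpace ℝ (Fin n)) 1 → ℝ), Continuous g → Integrable g ν := by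
    intro ν _ g hg
    have := hg.continuousOn.integrableOn_compact (μ := ν) (isCompact_univ
      (X := sphere (0 : EuclideanSpace ℝ (Fin n)) 1))
    rwa [integrableOn_univ] at this
  set c := ∫ u, w u ∂σ with hcdef
  have hσpos : 0 < σ univ := isOpen_univ.measure_pos σ univ_nonempty
  have hc : 0 < c := by
    obtain ⟨um, -, hum⟩ := (isCompact_univ
      (X := sphere (0 : EuclideanSpace ℝ (Fin n)) 1)).exists_isMinOn univ_nonempty
      hwc.continuousOn
    have humle : ∀ u, w um ≤ w u := fun u => hum (mem_univ u)
    have h1 : 0 < (σ univ).toReal * w um :=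
      mul_pos (ENNReal.toReal_pos hσpos.ne' (measure_ne_top σ univ)) (hwpos um)
    calc (0:ℝ) < (σ univ).toReal * w um := h1
      _ = ∫ _u, w um ∂σ := by rw [integral_const, smul_eq_mul, measureReal_def]
      _ ≤ c := integral_mono (integrable_const _) (hint σ w hwc) humle
  have hvolK : K.vol = (1 / (n:ℝ)) * c := rfl
  have hn' : (0:ℝ) < 1 / (n:ℝ) := by positivity
  have hvolpos : 0 < K.vol := by rw [hvolK]; exact mul_pos hn' hc
  -- the probability measure
  set d : sphere (0 : EuclideanSpace ℝ (Fin n)) 1 → ℝ≥0 :=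
    fun u => Real.toNNReal (w u / c) with hddef
  have hdc : Continuous d := continuous_real_toNNReal.comp (hwc.div_const c)
  have hdm : Measurable d := hdc.measurable
  have hdpos : ∀ u, 0 < d u := fun u => Real.toNNReal_pos.mpr (div_pos (hwpos u) hc)
  set μ := σ.withDensity (fun u => (d u : ℝ≥0∞)) with hμdef
  have hdofReal : ∀ u, ((d u : ℝ≥0) : ℝ≥0∞) = ENNReal.ofReal (w u / c) := fun u => rfl
  haveI hprob : IsProbabilityMeasure μ := by
    constructor
    rw [hμdef, withDensity_apply _ MeasurableSet.univ, Measure.restrict_univ]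
    have : ∫⁻ u, ((d u : ℝ≥0) : ℝ≥0∞) ∂σ = ENNReal.ofReal (∫ u, w u / c ∂σ) := by
      show ∫⁻ u, ENNReal.ofReal (w u / c) ∂σ = _
      rw [← ofReal_integral_eq_lintegral_ofReal (hint σ _ (hwc.div_const c))
        (Eventually.of_forall fun u => div_nonneg (hwpos u).le hc.le)]
    rw [this, integral_div, ← hcdef, div_self hc.ne', ENNReal.ofReal_one]
  -- transfer of integrals
  have key : ∀ g : sphere (0 : EuclideanSpace ℝ (Fin n)) 1 → ℝ,
      ∫ u, g u ∂μ = (∫ u, g u * w u ∂σ) / c := by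
    intro g
    rw [hμdef, integral_withDensity_eq_integral_smul hdm, ← integral_div]
    congr 1; funext u
    rw [NNReal.smul_def, Real.coe_toNNReal _ (div_nonneg (hwpos u).le hc.le), smul_eq_mul]
    ring
  have hψint : dualMixedVolume ψ K L / K.vol = ∫ u, ψ (r u) ∂μ := by
    rw [key]
    show (1 / (n:ℝ)) * (∫ u, ψ (r u) * w u ∂σ) / ((1 / (n:ℝ)) * c) = _
    rw [mul_div_mul_left _ _ hn'.ne']
  have hφint : dualMixedVolume φ K L / K.vol = ∫ u, φ (r u) ∂μ := by
    rw [key]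
    show (1 / (n:ℝ)) * (∫ u, φ (r u) * w u ∂σ) / ((1 / (n:ℝ)) * c) = _
    rw [mul_div_mul_left _ _ hn'.ne']
  -- the compact interval of values
  obtain ⟨um, -, hum⟩ := (isCompact_univ
    (X := sphere (0 : EuclideanSpace ℝ (Fin n)) 1)).exists_isMinOn univ_nonempty
    hrc.continuousOn
  obtain ⟨uM, -, huM⟩ := (isCompact_univ
    (X := sphere (0 : EuclideanSpace ℝ (Fin n)) 1)).exists_isMaxOn univ_nonempty
    hrc.continuousOn
  set A : Set ℝ := Icc (r um) (r uM) with hAdef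
  have hA : ∀ u, r u ∈ A := fun u => ⟨hum (mem_univ u), huM (mem_univ u)⟩
  have hAsub : A ⊆ Ioi (0:ℝ) := fun t ht => lt_of_lt_of_le (hrpos um) ht.1
  set J := ψ '' A with hJdef
  have hJcompact : IsCompact J := (isCompact_Icc).image_of_continuousOn (hψc.mono hAsub)
  have hJclosed : IsClosed J := hJcompact.isClosed
  have hJconv : Convex ℝ J :=
    ((isPreconnected_Icc).image _ (hψc.mono hAsub)).convex
  have hJsub : J ⊆ ψ '' Ioi 0 := image_mono hAsub
  have hHconvJ : ConvexOn ℝ J H := hHconv.subset hJsub hJconv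
  have hinvc : ContinuousOn ψinv J :=
    continuousOn_inv_image_compact isCompact_Icc (hψc.mono hAsub)
      (fun t ht => hinv t (hAsub ht))
  have hinvmaps : MapsTo ψinv J (Ioi (0:ℝ)) := by
    rintro s ⟨t, ht, rfl⟩
    rw [hinv t (hAsub ht)]
    exact hAsub ht
  have hHcJ : ContinuousOn H J := by
    refine ContinuousOn.congr (hφc.comp hinvc hinvmaps) ?_
    intro s hs
    exact hH s (hJsub hs)
  set f : sphere (0 : EuclideanSpace ℝ (Fin n)) 1 → ℝ := fun u => ψ (r u) with hfdef
  have hfc : Continuous f := hψc.comp_continuous hrc (fun u => hrpos u)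
  have hfmem : ∀ u, f u ∈ J := fun u => mem_image_of_mem ψ (hA u)
  have hHf : ∀ u, H (f u) = φ (r u) := fun u => by
    rw [hfdef]
    simp only []
    rw [hH _ (mem_image_of_mem ψ (hrpos u)), hinv _ (hrpos u)]
  have hHfc : Continuous (H ∘ f) := by
    have : (H ∘ f) = fun u => φ (r u) := funext hHf
    rw [this]
    exact hφc.comp_continuous hrc (fun u => hrpos u)
  have hHfint : Integrable (H ∘ f) μ := hint μ _ hHfc
  have hHfintegral : ∫ u, H (f u) ∂μ = ∫ u, φ (r u) ∂μ := by
    congr 1; funext u; exact hHf u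
  constructor
  · -- Jensen's inequality
    have jensen := hHconvJ.map_integral_le hHcJ hJclosed
      (Eventually.of_forall hfmem) (hint μ f hfc) hHfint
    rw [hψint, hφint, ← hHfintegral]
    exact jensen
  · intro hHs
    constructor
    · intro heq
      have hHsJ : StrictConvexOn ℝ J H := hHs.subset hJsub hJconv
      rcases hHsJ.ae_eq_const_or_map_average_lt hHcJ hJclosed
        (Eventually.of_forall hfmem) (hint μ f hfc) hHfint with hae | hlt
      · -- f is a.e. constant; upgrade to everywhere
        rw [average_eq_integral] at hae
        have haeσ : f =ᵐ[σ] Function.const _ (∫ u, f u ∂μ) := by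
          rw [hμdef] at hae
          rw [← withDensity_ae_eq (f := f) (g := Function.const _ (∫ u, f u ∂μ))
            (hdm.coe_nnreal_ennreal).aemeasurable
            (Eventually.of_forall fun u => by
              simp only [ne_eq, ENNReal.coe_eq_zero]
              exact (hdpos u).ne')]
          exact hae
        have hfeq : f = Function.const _ (∫ u, f u ∂μ) :=
          (hfc.ae_eq_iff_eq σ continuous_const).mp haeσ
        -- r is constant
        have hrconst : ∀ u, r u = r u₀ := by
          intro u
          have h1 : ψ (r u) = ψ (r u₀) := by
            have := congrFun hfeq u
            have h2 := congrFun hfeq u₀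
            simp only [Function.const_apply] at this h2
            rw [hfdef] at this h2
            simp only [] at this h2
            rw [this, h2]
          calc r u = ψinv (ψ (r u)) := (hinv _ (hrpos u)).symm
            _ = ψinv (ψ (r u₀)) := by rw [h1]
            _ = r u₀ := hinv _ (hrpos u₀)
        refine ⟨(r u₀)⁻¹, inv_pos.mpr (hrpos u₀), ?_⟩
        intro u hu
        have hus : u ∈ sphere (0 : EuclideanSpace ℝ (Fin n)) 1 :=
          mem_sphere_zero_iff_norm.mpr hu
        have := hrconst ⟨u, hus⟩
        rw [hrdef] at this
        simp only [] at this
        have hq : K.ρ u / L.ρ u = r u₀ := this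
        have hLu : 0 < L.ρ u := L.pos u hu
        have hgoal : L.ρ u = K.ρ u / r u₀ := by
          rw [eq_div_iff (hrpos u₀).ne', ← hq]
          field_simp
        rw [hgoal, inv_mul_eq_div]
      · exfalso
        rw [average_eq_integral, average_eq_integral] at hlt
        rw [hψint, hφint, ← hHfintegral] at heq
        exact absurd heq (ne_of_lt hlt)
    · rintro ⟨lam, hlam, hdil⟩
      have hrconst : ∀ u, r u = lam⁻¹ := by
        intro u
        show K.ρ ↑u / L.ρ ↑u = lam⁻¹
        rw [hdil _ (hnorm u), mul_comm, div_mul_eq_div_div, div_self (hKpos u).ne', one_div]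
      have htpos : (0:ℝ) < lam⁻¹ := inv_pos.mpr hlam
      have hψval : dualMixedVolume ψ K L / K.vol = ψ lam⁻¹ := by
        rw [hψint]
        rw [integral_congr_ae (Eventually.of_forall (fun u => by rw [hrconst u]))]
        simp [measure_univ]
      have hφval : dualMixedVolume φ K L / K.vol = φ lam⁻¹ := by
        rw [hφint]
        rw [integral_congr_ae (Eventually.of_forall (fun u => by rw [hrconst u]))]
        simp [measure_univ]
      rw [hψval, hφval, hH _ (mem_image_of_mem ψ htpos), hinv _ htpos]
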